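/- For all nonnegative integers n ≥ k, Σ_{m=k}^{n} S1_C(n, m) · S2_C(m, k) = δ_{n,k} (Kronecker delta, as an element of K), where S1_C and S2_C denote the Stirling-Carlitz numbers of the first and second kind respectively. -/

import Mathlib

open scoped Classical
open PowerSeries Finset

noncomputable section

variable (F : Type) [Field F] [Fintype F]

/-- The rational function field `K = 𝔽_r(T)`. -/
abbrev K : Type := RatFunc F

/-- `r`, the cardinality of the finite field of constants. -/
def rr : ℕ := Fintype.card F

/-- The variable `T` of the rational function field. -/
def Tv : K F := RatFunc.X

/-- `[i] = T^{r^i} - T`. -/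
def br (i : ℕ) : K F := Tv F ^ (rr F) ^ i - Tv F

/-- `D_0 = 1`, `D_i = [i] · D_{i-1}^r`. -/
def D : ℕ → K F
  | 0 => 1
  | i + 1 => br F (i + 1) * D i ^ rr F

/-- `L_0 = 1`, `L_i = [i] · L_{i-1}`. -/
def L : ℕ → K F
  | 0 => 1
  | i + 1 => br F (i + 1) * L i

/-- The Carlitz factorial `Π(n) = ∏_j D_j^{c_j}`, where `c_j = n / r^j % r` are the
base-`r` digits of `n` (all digits with index `> n` vanish since `r ≥ 2`). -/
def Cf (n : ℕ) : K F := ∏ j ∈ Finset.range (n + 1), D F j ^ (n / (rr F) ^ j % rr F)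

/-- The Carlitz logarithm `log_C(z) = Σ_{i ≥ 0} (-1)^i z^{r^i} / L_i`: the coefficient of
`z^m` is `(-1)^i / L_i` if `m = r^i` and `0` otherwise (note `i ≤ r^i = m` since `r ≥ 2`). -/
def logC : PowerSeries (K F) :=
  PowerSeries.mk fun m =>
    ∑ i ∈ Finset.range (m + 1), if m = (rr F) ^ i then (-1 : K F) ^ i / L F i else 0

/-- The Carlitz exponential `e_C(z) = Σ_{i ≥ 0} z^{r^i} / D_i`. -/
def eC : PowerSeries (K F) :=
  PowerSeries.mk fun m =>
    ∑ i ∈ Finset.range (m + 1), if m = (rr F) ^ i then 1 / D F i else 0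

/-- The power series `log_C(z)/z`. -/
def logCdivZ : PowerSeries (K F) :=
  PowerSeries.mk fun n => PowerSeries.coeff (n + 1) (logC F)

/-- The power series `e_C(z)/z`. -/
def eCdivZ : PowerSeries (K F) :=
  PowerSeries.mk fun n => PowerSeries.coeff (n + 1) (eC F)

lemma two_le_rr : 2 ≤ rr F := Fintype.one_lt_card

lemma char_facts : ∃ p s : ℕ, p.Prime ∧ CharP (K F) p ∧ rr F = p ^ s ∧ 0 < s := by
  obtain ⟨p, hp⟩ := CharP.exists F
  obtain ⟨n, hpp, hcard⟩ := FiniteField.card F p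
  refine ⟨p, n, hpp, ?_, hcard, n.2⟩
  exact charP_of_injective_algebraMap (RatFunc.algebraMap_injective F) p

/-- the `q^t`-power map is a ring hom -/
lemma qpow_hom (t : ℕ) : ∃ φ : K F →+* K F, ∀ x, φ x = x ^ (rr F) ^ t := by
  obtain ⟨p, s, hp, hchar, hq, -⟩ := char_facts F
  haveI : Fact p.Prime := ⟨hp⟩
  haveI : ExpChar (K F) p := ExpChar.prime hp
  refine ⟨iterateFrobenius (K F) p (s * t), fun x => ?_⟩
  rw [iterateFrobenius_def, hq, ← pow_mul]

lemma br_split (t u : ℕ) : br F (t + u) = (br F u) ^ ((rr F) ^ t) + br F t := by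
  obtain ⟨φ, hφ⟩ := qpow_hom F t
  have h2 : (Tv F ^ rr F ^ u - Tv F) ^ rr F ^ t
      = (Tv F ^ rr F ^ u) ^ rr F ^ t - Tv F ^ rr F ^ t := by
    rw [← hφ, map_sub, map_pow, hφ]
    rw [← pow_mul, ← pow_mul, mul_comm]
  simp only [br, h2, ← pow_mul, ← pow_add]
  rw [add_comm u t]
  ring

lemma br_zero : br F 0 = 0 := by simp [br]

lemma br_ne_zero {i : ℕ} (hi : 1 ≤ i) : br F i ≠ 0 := by
  have h2 : 2 ≤ (rr F) ^ i := le_trans (two_le_rr F) (Nat.le_self_pow (by omega) _)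
  have heq : br F i = algebraMap (Polynomial F) (K F)
      (Polynomial.X ^ (rr F) ^ i - Polynomial.X) := by
    rw [map_sub, map_pow, RatFunc.algebraMap_X]; rfl
  rw [heq]
  intro hc
  have h0 : (Polynomial.X ^ (rr F) ^ i - Polynomial.X : Polynomial F) = 0 :=
    (RatFunc.algebraMap_injective F) (by simpa using hc)
  rw [sub_eq_zero] at h0
  have := congrArg Polynomial.natDegree h0
  rw [Polynomial.natDegree_X_pow, Polynomial.natDegree_X] at this
  omega

lemma D_ne_zero (i : ℕ) : D F i ≠ 0 := by
  induction i with
  | zero => simp [D]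
  | succ i ih =>
    simp only [D]
    exact mul_ne_zero (br_ne_zero F (Nat.succ_le_succ (Nat.zero_le i))) (pow_ne_zero _ ih)

lemma L_ne_zero (i : ℕ) : L F i ≠ 0 := by
  induction i with
  | zero => simp [L]
  | succ i ih =>
    exact mul_ne_zero (br_ne_zero F (Nat.succ_le_succ (Nat.zero_le i))) ih

def SS (N : ℕ) : K F :=
  ∑ t ∈ Finset.range (N + 1), (-1 : K F) ^ (N - t) * ((D F t)⁻¹ * ((L F (N - t)) ^ (rr F) ^ t)⁻¹)

lemma SS_zero : SS F 0 = 1 := by simp [SS, D, L]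

lemma SS_rec (M : ℕ) : br F (M + 1) * SS F (M + 1) = (SS F M) ^ (rr F) - SS F M := by
  obtain ⟨φ, hφ1⟩ := qpow_hom F 1
  have hφ : ∀ x, φ x = x ^ rr F := fun x => by rw [hφ1, pow_one]
  set a : ℕ → ℕ → K F :=
    fun t u => (-1 : K F) ^ u * ((D F t)⁻¹ * ((L F u) ^ (rr F) ^ t)⁻¹) with ha
  have key : ∀ t ∈ Finset.range (M + 2),
      br F (M + 1) * ((-1 : K F) ^ (M + 1 - t) * ((D F t)⁻¹ * ((L F (M + 1 - t)) ^ (rr F) ^ t)⁻¹))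
        = (if t ≤ M then -(a t (M - t)) else 0)
          + (if 1 ≤ t then φ (a (t - 1) (M - (t - 1))) else 0) := by
    intro t ht
    rw [Finset.mem_range] at ht
    have htM : t ≤ M + 1 := by omega
    have hsplit : br F (M + 1) = (br F (M + 1 - t)) ^ (rr F) ^ t + br F t := by
      have h := br_split F t (M + 1 - t)
      rw [show t + (M + 1 - t) = M + 1 by omega] at h
      exact h
    rw [hsplit, add_mul]
    congr 1
    · -- part 1
      by_cases h : t ≤ M
      · rw [if_pos h]
        have hu : M + 1 - t = (M - t) + 1 := by omega
        rw [hu, L]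
        have hb := br_ne_zero F (i := M - t + 1) (by omega)
        have hbp : (br F (M - t + 1)) ^ (rr F) ^ t ≠ 0 := pow_ne_zero _ hb
        have hD := D_ne_zero F t
        have hL : (L F (M - t)) ^ (rr F) ^ t ≠ 0 := pow_ne_zero _ (L_ne_zero F (M - t))
        rw [mul_pow, pow_succ, ha]
        field_simp
      · rw [if_neg h]
        have ht1 : t = M + 1 := by omega
        rw [ht1, Nat.sub_self, br_zero, zero_pow (pow_ne_zero _ (by have := two_le_rr F; omega) :
          (rr F) ^ (M+1) ≠ 0), zero_mul]
    · -- part 2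
      by_cases h : 1 ≤ t
      · rw [if_pos h]
        obtain ⟨t', rfl⟩ : ∃ t', t = t' + 1 := ⟨t - 1, by omega⟩
        have hu : M + 1 - (t' + 1) = M - t' := by omega
        simp only [Nat.add_sub_cancel]
        rw [hu, ha]
        simp only []
        rw [map_mul, map_mul, map_inv₀, map_inv₀, map_pow, map_neg, map_one, hφ (D F t'),
          hφ ((L F (M - t')) ^ (rr F) ^ t'), D]
        have hb := br_ne_zero F (i := t' + 1) (by omega)
        have hD := D_ne_zero F t'
        have hDq : (D F t') ^ (rr F) ≠ 0 := pow_ne_zero _ hD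
        have hL : (L F (M - t')) ^ (rr F) ^ (t' + 1) ≠ 0 :=
          pow_ne_zero _ (L_ne_zero F (M - t'))
        rw [← pow_mul, ← pow_succ]
        field_simp
      · rw [if_neg h]
        have : t = 0 := by omega
        rw [this, br_zero, zero_mul]
  rw [SS, Finset.mul_sum, Finset.sum_congr rfl key, Finset.sum_add_distrib]
  have hA : ∑ t ∈ Finset.range (M + 2), (if t ≤ M then -(a t (M - t)) else 0)
      = -(SS F M) := by
    rw [Finset.sum_range_succ, if_neg (by omega), add_zero]
    rw [Finset.sum_congr rfl (fun t ht => if_pos (Nat.lt_succ_iff.mp (Finset.mem_range.mp ht)))]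
    rw [Finset.sum_neg_distrib]
    congr 1
  have hB : ∑ t ∈ Finset.range (M + 2), (if 1 ≤ t then φ (a (t - 1) (M - (t - 1))) else 0)
      = φ (SS F M) := by
    rw [Finset.sum_range_succ' (fun t => if 1 ≤ t then φ (a (t - 1) (M - (t - 1))) else 0) (M + 1)]
    rw [if_neg (by omega), add_zero]
    rw [Finset.sum_congr rfl (fun t _ => if_pos (by omega))]
    simp only [Nat.add_sub_cancel]
    rw [← map_sum]
    congr 1
  rw [hA, hB, hφ]
  ring

lemma SS_eq_zero : ∀ {N : ℕ}, 1 ≤ N → SS F N = 0 := by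
  intro N
  induction N with
  | zero => omega
  | succ M ih =>
    intro _
    have h := SS_rec F M
    have hb := br_ne_zero F (i := M + 1) (by omega)
    rcases Nat.eq_zero_or_pos M with h0 | h1
    · subst h0
      rw [SS_zero, one_pow, sub_self] at h
      exact (mul_eq_zero.mp h).resolve_left hb
    · rw [ih h1, zero_pow (by have := two_le_rr F; omega : rr F ≠ 0), sub_self] at h
      exact (mul_eq_zero.mp h).resolve_left hb

lemma constantCoeff_logC : PowerSeries.constantCoeff (logC F) = 0 := by
  rw [← PowerSeries.coeff_zero_eq_constantCoeff, logC, PowerSeries.coeff_mk]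
  apply Finset.sum_eq_zero
  intro t _
  rw [if_neg]
  intro hc
  have : 0 < (rr F) ^ t := pow_pos (by have := two_le_rr F; omega) t
  omega

lemma constantCoeff_eC : PowerSeries.constantCoeff (eC F) = 0 := by
  rw [← PowerSeries.coeff_zero_eq_constantCoeff, eC, PowerSeries.coeff_mk]
  apply Finset.sum_eq_zero
  intro t _
  rw [if_neg]
  intro hc
  have : 0 < (rr F) ^ t := pow_pos (by have := two_le_rr F; omega) t
  omega

lemma coeff_logC_qpow (u : ℕ) :
    PowerSeries.coeff ((rr F) ^ u) (logC F) = (-1 : K F) ^ u * (L F u)⁻¹ := by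
  rw [logC, PowerSeries.coeff_mk]
  rw [Finset.sum_eq_single u]
  · rw [if_pos rfl, div_eq_mul_inv]
  · intro w _ hw
    rw [if_neg]
    intro hc
    exact hw (Nat.pow_right_injective (two_le_rr F) hc.symm)
  · intro hu
    exfalso
    rw [Finset.mem_range, not_lt] at hu
    have := Nat.lt_pow_self (n := u) (by have := two_le_rr F; omega : 1 < rr F)
    omega

lemma coeff_logC_eq_zero {j : ℕ} (h : ∀ u, j ≠ (rr F) ^ u) :
    PowerSeries.coeff j (logC F) = 0 := by
  rw [logC, PowerSeries.coeff_mk]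
  apply Finset.sum_eq_zero
  intro t _
  rw [if_neg (h t)]

lemma collapse (i : ℕ) (f : ℕ → K F) :
    ∑ m ∈ Finset.range (i + 1), ∑ t ∈ Finset.range (m + 1),
        (if m = (rr F) ^ t then f t else 0)
      = ∑ t ∈ Finset.range (i + 1), (if (rr F) ^ t ≤ i then f t else 0) := by
  have h1 : ∀ m ∈ Finset.range (i + 1),
      (∑ t ∈ Finset.range (m + 1), (if m = (rr F) ^ t then f t else 0))
        = ∑ t ∈ Finset.range (i + 1), (if m = (rr F) ^ t then f t else 0) := by
    intro m hm
    apply Finset.sum_subset (Finset.range_subset_range.mpr (by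
      rw [Finset.mem_range] at hm; omega))
    intro t _ ht2
    rw [Finset.mem_range, not_lt] at ht2
    rw [if_neg]
    intro hc
    have := Nat.lt_pow_self (n := t) (by have := two_le_rr F; omega : 1 < rr F)
    omega
  rw [Finset.sum_congr rfl h1, Finset.sum_comm]
  apply Finset.sum_congr rfl
  intro t _
  rw [Finset.sum_ite_eq' (Finset.range (i + 1)) ((rr F) ^ t) (fun _ => f t)]
  simp [Nat.lt_succ_iff]

section Generic
variable {R : Type*} [CommRing R]

lemma coeff_pow_congr {f g : PowerSeries R} {n : ℕ}
    (h : ∀ i ≤ n, PowerSeries.coeff i f = PowerSeries.coeff i g) (k : ℕ) :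
    ∀ i ≤ n, PowerSeries.coeff i (f ^ k) = PowerSeries.coeff i (g ^ k) := by
  intro i hi
  have hdvd : (X : PowerSeries R) ^ (n + 1) ∣ f - g := by
    rw [X_pow_dvd_iff]
    intro m hm
    rw [map_sub, h m (Nat.lt_succ_iff.mp hm), sub_self]
  have h2 : (X : PowerSeries R) ^ (n + 1) ∣ f ^ k - g ^ k :=
    hdvd.trans (sub_dvd_pow_sub_pow f g k)
  have := (X_pow_dvd_iff.mp h2) i (Nat.lt_succ_of_le hi)
  rw [map_sub, sub_eq_zero] at this
  exact this

lemma coeff_pow_eq_zero' {f : PowerSeries R} (hf : PowerSeries.constantCoeff f = 0)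
    {m i : ℕ} (him : i < m) : PowerSeries.coeff i (f ^ m) = 0 := by
  have : (X : PowerSeries R) ^ m ∣ f ^ m := pow_dvd_pow_of_dvd (X_dvd_iff.mpr hf) m
  exact X_pow_dvd_iff.mp this i him

lemma coeff_aeval (P : Polynomial R) (g : PowerSeries R)
    (hg : PowerSeries.constantCoeff g = 0) (i : ℕ) :
    PowerSeries.coeff i (Polynomial.aeval g P)
      = ∑ m ∈ Finset.range (i + 1), P.coeff m * PowerSeries.coeff i (g ^ m) := by
  set Nb := max (P.natDegree + 1) (i + 1) with hNb
  have h1 : Polynomial.aeval g P = ∑ m ∈ Finset.range Nb, P.coeff m • g ^ m :=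
    Polynomial.aeval_eq_sum_range' (n := Nb)
      (lt_of_lt_of_le (Nat.lt_succ_self _) (le_max_left _ _)) g
  rw [h1, map_sum]
  have h2 : ∀ m ∈ Finset.range Nb,
      PowerSeries.coeff i (P.coeff m • g ^ m) = P.coeff m * PowerSeries.coeff i (g ^ m) := by
    intro m _
    rw [map_smul, smul_eq_mul]
  rw [Finset.sum_congr rfl h2]
  symm
  apply Finset.sum_subset (Finset.range_subset_range.mpr (le_max_right _ _))
  intro m hm hm2
  rcases Nat.lt_or_ge m (i + 1) with h | h
  · exact absurd (Finset.mem_range.mpr h) hm2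
  · rw [coeff_pow_eq_zero' hg h, mul_zero]

lemma coeff_pow_char {K : Type*} [Field K] (p : ℕ) [Fact p.Prime] [CharP K p]
    (f : PowerSeries K) (n : ℕ) :
    PowerSeries.coeff n (f ^ p) =
      if p ∣ n then (PowerSeries.coeff (n / p) f) ^ p else 0 := by
  have hp : 0 < p := (Fact.out : p.Prime).pos
  set P : Polynomial K := PowerSeries.trunc (n + 1) f with hP
  have hcoe : ∀ i ≤ n, PowerSeries.coeff i f = PowerSeries.coeff i (P : PowerSeries K) := by
    intro i hi
    rw [Polynomial.coeff_coe, PowerSeries.coeff_trunc, if_pos (Nat.lt_succ_of_le hi)]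
  have h1 : PowerSeries.coeff n (f ^ p) = PowerSeries.coeff n ((P : PowerSeries K) ^ p) :=
    coeff_pow_congr hcoe p n le_rfl
  have h2 : ((P : PowerSeries K) ^ p) = ((P ^ p : Polynomial K) : PowerSeries K) := by
    push_cast; ring
  rw [h1, h2, Polynomial.coeff_coe, ← Polynomial.map_frobenius_expand p, Polynomial.coeff_map,
    Polynomial.coeff_expand hp]
  split_ifs with h
  · rw [frobenius_def, hcoe (n / p) (Nat.div_le_self n p), Polynomial.coeff_coe]
  · rw [map_zero]

lemma coeff_pow_char_pow {K : Type*} [Field K] (p : ℕ) [Fact p.Prime] [CharP K p]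
    (f : PowerSeries K) (s n : ℕ) :
    PowerSeries.coeff n (f ^ p ^ s) =
      if p ^ s ∣ n then (PowerSeries.coeff (n / p ^ s) f) ^ p ^ s else 0 := by
  induction s generalizing n with
  | zero => simp
  | succ s ih =>
    have hp : 0 < p := (Fact.out : p.Prime).pos
    have hps : (0:ℕ) < p ^ s := pow_pos hp s
    rw [pow_succ, pow_mul, coeff_pow_char p _ n, ]
    by_cases h1 : p ∣ n
    · rw [if_pos h1, ih (n / p)]
      by_cases h2 : p ^ s ∣ n / p
      · rw [if_pos h2, if_pos, Nat.div_div_eq_div_mul, ← pow_mul, mul_comm p (p^s), ← pow_succ]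
        rw [mul_comm (p^s) p]
        exact (Nat.dvd_div_iff_mul_dvd h1).mp h2
      · rw [if_neg h2, if_neg, zero_pow hp.ne']
        intro hc
        exact h2 ((Nat.dvd_div_iff_mul_dvd h1).mpr (by rwa [mul_comm]))
    · rw [if_neg h1, if_neg]
      intro hc
      exact h1 (dvd_trans (dvd_pow_self p s.succ_ne_zero) hc)

end Generic

lemma core (i : ℕ) :
    ∑ m ∈ Finset.range (i + 1),
        PowerSeries.coeff m (eC F) * PowerSeries.coeff i ((logC F) ^ m)
      = if i = 1 then 1 else 0 := by
  obtain ⟨p, s, hp, hchar, hq, hs⟩ := char_facts F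
  haveI : Fact p.Prime := ⟨hp⟩
  have hr2 := two_le_rr F
  set f : ℕ → K F :=
    fun t => (D F t)⁻¹ * PowerSeries.coeff i ((logC F) ^ ((rr F) ^ t)) with hfdef
  have hstep : ∀ m ∈ Finset.range (i + 1),
      PowerSeries.coeff m (eC F) * PowerSeries.coeff i ((logC F) ^ m)
        = ∑ t ∈ Finset.range (m + 1), (if m = (rr F) ^ t then f t else 0) := by
    intro m _
    rw [eC, PowerSeries.coeff_mk, Finset.sum_mul]
    apply Finset.sum_congr rfl
    intro t _
    split_ifs with h
    · rw [one_div, h]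
    · rw [zero_mul]
  rw [Finset.sum_congr rfl hstep, collapse]
  have hcoeffpow : ∀ t : ℕ,
      PowerSeries.coeff i ((logC F) ^ ((rr F) ^ t))
        = if (rr F) ^ t ∣ i
            then (PowerSeries.coeff (i / (rr F) ^ t) (logC F)) ^ (rr F) ^ t else 0 := by
    intro t
    have hqt : (rr F) ^ t = p ^ (s * t) := by rw [hq, ← pow_mul]
    rw [hqt, coeff_pow_char_pow p (logC F) (s * t) i]
  by_cases hex : ∃ N, i = (rr F) ^ N
  · obtain ⟨N, rfl⟩ := hex
    have hterm : ∀ t ∈ Finset.range ((rr F) ^ N + 1),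
        (if (rr F) ^ t ≤ (rr F) ^ N then f t else 0)
          = (if t ≤ N then
              (-1 : K F) ^ (N - t) * ((D F t)⁻¹ * ((L F (N - t)) ^ (rr F) ^ t)⁻¹) else 0) := by
      intro t _
      by_cases ht : t ≤ N
      · rw [if_pos (Nat.pow_le_pow_right (by omega) ht), if_pos ht]
        obtain ⟨φ, hφ⟩ := qpow_hom F t
        rw [hfdef]
        simp only []
        rw [hcoeffpow t, if_pos (pow_dvd_pow _ ht),
          Nat.pow_div ht (by omega), coeff_logC_qpow]
        rw [← hφ, map_mul, map_inv₀, map_pow, map_neg, map_one, hφ]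
        ring
      · rw [if_neg ht, if_neg]
        rw [not_le]
        exact Nat.pow_lt_pow_right (by omega) (by omega)
    rw [Finset.sum_congr rfl hterm]
    have hNle : N + 1 ≤ (rr F) ^ N + 1 := by
      have := Nat.lt_pow_self (n := N) (by omega : 1 < rr F)
      omega
    rw [← Finset.sum_subset (Finset.range_subset_range.mpr hNle) (by
      intro t _ ht2
      rw [Finset.mem_range, not_lt] at ht2
      rw [if_neg (by omega)])]
    rw [Finset.sum_congr rfl (fun t ht => if_pos (Nat.lt_succ_iff.mp (Finset.mem_range.mp ht)))]
    rw [← SS]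
    rcases Nat.eq_zero_or_pos N with h0 | h1
    · subst h0
      rw [SS_zero, if_pos (by norm_num)]
    · rw [SS_eq_zero F h1, if_neg]
      intro hc
      have : rr F ≤ (rr F) ^ N := Nat.le_self_pow (by omega) _
      omega
  · rw [if_neg (by
      intro hc
      exact hex ⟨0, by rw [hc, pow_zero]⟩)]
    apply Finset.sum_eq_zero
    intro t _
    split_ifs with h1
    · rw [hfdef]
      simp only []
      rw [hcoeffpow t]
      split_ifs with h2
      · rw [coeff_logC_eq_zero F (fun u hu => hex ⟨t + u, by
          rw [pow_add, ← hu, Nat.mul_div_cancel' h2]⟩),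
          zero_pow (by positivity), mul_zero]
      · rw [mul_zero]
    · rfl

lemma key_sum (n k : ℕ) :
    ∑ m ∈ Finset.Icc k n,
        PowerSeries.coeff n ((logC F) ^ m) * PowerSeries.coeff m ((eC F) ^ k)
      = if n = k then 1 else 0 := by
  have hconstl := constantCoeff_logC F
  have hconste := constantCoeff_eC F
  -- extend sum to range (n+1)
  have hsub : Finset.Icc k n ⊆ Finset.range (n + 1) := by
    intro m hm
    rw [Finset.mem_Icc] at hm
    rw [Finset.mem_range]
    omega
  rw [Finset.sum_subset hsub (by
    intro m hm hm2
    rw [Finset.mem_range] at hm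
    rw [Finset.mem_Icc, not_and_or] at hm2
    have hmk : m < k := by omega
    rw [coeff_pow_eq_zero' hconste hmk, mul_zero])]
  set P : Polynomial (K F) := PowerSeries.trunc (n + 1) ((eC F) ^ k) with hP
  set Q : Polynomial (K F) := (PowerSeries.trunc (n + 1) (eC F)) ^ k with hQ
  have htrunc : ∀ j ≤ n, PowerSeries.coeff j (eC F)
      = PowerSeries.coeff j ((PowerSeries.trunc (n + 1) (eC F) : Polynomial (K F)) :
        PowerSeries (K F)) := by
    intro j hj
    rw [Polynomial.coeff_coe, PowerSeries.coeff_trunc, if_pos (Nat.lt_succ_of_le hj)]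
  have hPQ : ∀ m ≤ n, P.coeff m = Q.coeff m := by
    intro m hm
    have h1 : P.coeff m = PowerSeries.coeff m ((eC F) ^ k) := by
      rw [hP, PowerSeries.coeff_trunc, if_pos (Nat.lt_succ_of_le hm)]
    have h2 : Q.coeff m = PowerSeries.coeff m
        (((PowerSeries.trunc (n + 1) (eC F) : Polynomial (K F)) : PowerSeries (K F)) ^ k) := by
      rw [hQ, ← Polynomial.coeff_coe]
      norm_cast
    rw [h1, h2, coeff_pow_congr htrunc k m hm]
  have e1 : ∑ m ∈ Finset.range (n + 1),
      PowerSeries.coeff n ((logC F) ^ m) * PowerSeries.coeff m ((eC F) ^ k)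
        = PowerSeries.coeff n (Polynomial.aeval (logC F) P) := by
    rw [coeff_aeval P (logC F) hconstl n]
    apply Finset.sum_congr rfl
    intro m hm
    rw [Finset.mem_range] at hm
    rw [hP, PowerSeries.coeff_trunc, if_pos (by omega), mul_comm]
  have e2 : PowerSeries.coeff n (Polynomial.aeval (logC F) P)
      = PowerSeries.coeff n (Polynomial.aeval (logC F) Q) := by
    rw [coeff_aeval P (logC F) hconstl n, coeff_aeval Q (logC F) hconstl n]
    apply Finset.sum_congr rfl
    intro m hm
    rw [Finset.mem_range] at hm
    rw [hPQ m (by omega)]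
  set G : PowerSeries (K F) := Polynomial.aeval (logC F) (PowerSeries.trunc (n + 1) (eC F))
    with hG
  have e3 : Polynomial.aeval (logC F) Q = G ^ k := by
    rw [hQ, map_pow]
  have hGX : ∀ i ≤ n, PowerSeries.coeff i G = PowerSeries.coeff i X := by
    intro i hi
    rw [hG, coeff_aeval _ (logC F) hconstl i, PowerSeries.coeff_X]
    rw [← core F i]
    apply Finset.sum_congr rfl
    intro m hm
    rw [Finset.mem_range] at hm
    rw [PowerSeries.coeff_trunc, if_pos (by omega)]
  rw [e1, e2, e3, coeff_pow_congr hGX k n le_rfl, PowerSeries.coeff_X_pow]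

lemma Cf_ne_zero (n : ℕ) : Cf F n ≠ 0 :=
  Finset.prod_ne_zero_iff.mpr fun j _ => pow_ne_zero _ (D_ne_zero F j)

/-- Orthogonality (Theorem, first identity): for `n ≥ k`,
`Σ_{m=k}^n S1_C(n, m) · S2_C(m, k) = δ_{n,k}`. -/
theorem stirlingCarlitz_orthogonality_first
    (S1C S2C : ℕ → ℕ → K F)
    (hS1C : ∀ n k : ℕ,
      PowerSeries.coeff n (logC F ^ k) / Cf F k = S1C n k / Cf F n)
    (hS2C : ∀ n k : ℕ,
      PowerSeries.coeff n (eC F ^ k) / Cf F k = S2C n k / Cf F n)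
    (n k : ℕ) (hkn : k ≤ n) :
    ∑ m ∈ Finset.Icc k n, S1C n m * S2C m k = if n = k then (1 : K F) else 0 := by
  have hCf : ∀ j, Cf F j ≠ 0 := Cf_ne_zero F
  have hterm : ∀ m ∈ Finset.Icc k n, S1C n m * S2C m k
      = (Cf F n * (Cf F k)⁻¹)
        * (PowerSeries.coeff n ((logC F) ^ m)
            * PowerSeries.coeff m ((eC F) ^ k)) := by
    intro m _
    have h1 := hS1C n m
    have h2 := hS2C m k
    rw [div_eq_div_iff (hCf m) (hCf n)] at h1
    rw [div_eq_div_iff (hCf k) (hCf m)] at h2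
    have e1 : S1C n m = PowerSeries.coeff n ((logC F) ^ m) * Cf F n / Cf F m := by
      rw [eq_div_iff (hCf m)]
      linear_combination -h1
    have e2 : S2C m k = PowerSeries.coeff m ((eC F) ^ k) * Cf F m / Cf F k := by
      rw [eq_div_iff (hCf k)]
      linear_combination -h2
    rw [e1, e2]
    field_simp
    rw [div_eq_div_iff (mul_ne_zero (hCf m) (hCf k)) (hCf k)]
    ring
  rw [Finset.sum_congr rfl hterm, ← Finset.mul_sum, key_sum F n k]
  split_ifs with h
  · subst h
    rw [mul_one, mul_inv_cancel₀ (hCf n)]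
  · rw [mul_zero]
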